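/- Let B = {m₁,…,m_r} be a set of monomials of R = ℝ[x₁,…,xₙ] connected to 1 and σ a linear form defined on ⟨B⁺·B⁺⟩. Suppose P = {p₁,…,p_r} is a family of polynomials with ⟨P⟩ = ⟨B⟩, σ(pᵢ·pⱼ) = 0 for i ≠ j, and σ(pⱼ²) ≠ 0 for all j. For each monomial m'ᵢ in ∂B = {m'₁,…,m'_l}, set ρᵢ = m'ᵢ − ∑_{j=1}^r (σ(m'ᵢ·pⱼ)/σ(pⱼ²)) pⱼ, and assume σ(ρᵢ·ρⱼ) = 0 for all 1 ≤ i, j ≤ l. Then σ coincides on ⟨B⁺·B⁺⟩ with a linear form σ̃ on R such that: (1) the Hankel operator H_{σ̃} has rank r; (2) the images of B and of P are bases of the quotient A_{σ̃} = R/ker H_{σ̃}; (3) the ideal ker H_{σ̃} is generated by ρ₁,…,ρ_l; and (4) the matrix of multiplication by x_k on A_{σ̃} in the basis P is M_k = (σ(x_k·pᵢ·pⱼ)/σ(pⱼ²))_{1 ≤ i, j ≤ r}. -/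

import Mathlib

open MvPolynomial Matrix

/-- The Hankel operator associated to a linear form `σ` on `ℝ[x₁,…,xₙ]`:
it sends `p` to the linear form `q ↦ σ (p * q)`. -/
noncomputable def hankel {n : ℕ} (σ : Module.Dual ℝ (MvPolynomial (Fin n) ℝ)) :
    MvPolynomial (Fin n) ℝ →ₗ[ℝ] Module.Dual ℝ (MvPolynomial (Fin n) ℝ) :=
  (LinearMap.llcomp ℝ (MvPolynomial (Fin n) ℝ) (MvPolynomial (Fin n) ℝ) ℝ σ).comp
    (LinearMap.mul ℝ (MvPolynomial (Fin n) ℝ))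

/-- A set `B` of monomials (identified with their exponent multi-indices) is
connected to 1 if it contains `1 = x^0` and every `m ≠ 1` in `B` is `xᵢ·m'`
for some variable `xᵢ` and some `m' ∈ B`. -/
def connectedTo1 {n : ℕ} (B : Finset (Fin n →₀ ℕ)) : Prop :=
  (0 : Fin n →₀ ℕ) ∈ B ∧ ∀ α ∈ B, α ≠ 0 → ∃ i : Fin n, ∃ β ∈ B, α = β + Finsupp.single i 1

/-- `B⁺ = B ∪ x₁B ∪ ⋯ ∪ xₙB` on the level of exponents. -/
noncomputable def plusSet {n : ℕ} (B : Finset (Fin n →₀ ℕ)) : Finset (Fin n →₀ ℕ) :=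
  B ∪ Finset.univ.biUnion fun i : Fin n => B.image (· + Finsupp.single i 1)

/-- `∂B = B⁺ \ B` on the level of exponents. -/
noncomputable def borderSet {n : ℕ} (B : Finset (Fin n →₀ ℕ)) : Finset (Fin n →₀ ℕ) :=
  plusSet B \ B

/-- The product set `B·B' = {m·m' : m ∈ B, m' ∈ B'}` on the level of exponents. -/
noncomputable def mulSet {n : ℕ} (B B' : Finset (Fin n →₀ ℕ)) : Finset (Fin n →₀ ℕ) :=
  (B ×ˢ B').image fun p => p.1 + p.2

/-- The span `⟨B⟩` of a set of monomials. -/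
noncomputable def spanMon {n : ℕ} (B : Finset (Fin n →₀ ℕ)) :
    Submodule ℝ (MvPolynomial (Fin n) ℝ) :=
  Submodule.span ℝ ((fun α => (monomial α (1 : ℝ))) '' (B : Set (Fin n →₀ ℕ)))


namespace Stmt9Aux

variable {n : ℕ} (σ : Module.Dual ℝ (MvPolynomial (Fin n) ℝ)) {r : ℕ}
  (p : Fin r → MvPolynomial (Fin n) ℝ)

noncomputable def proj : MvPolynomial (Fin n) ℝ →ₗ[ℝ] MvPolynomial (Fin n) ℝ :=
  ∑ j, (((σ (p j ^ 2))⁻¹ • (σ ∘ₗ LinearMap.mulRight ℝ (p j))).smulRight (p j))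
lemma proj_apply (f : MvPolynomial (Fin n) ℝ) :
    proj σ p f = ∑ j, (σ (f * p j) / σ (p j ^ 2)) • p j := by simp [proj, div_eq_inv_mul]
lemma proj_mem (f : MvPolynomial (Fin n) ℝ) :
    proj σ p f ∈ Submodule.span ℝ (Set.range p) := by
  rw [proj_apply]
  exact Submodule.sum_mem _ fun j _ => Submodule.smul_mem _ _ (Submodule.subset_span ⟨j, rfl⟩)
variable (horth : ∀ i j, i ≠ j → σ (p i * p j) = 0) (hnz : ∀ j, σ (p j ^ 2) ≠ 0)
include horth hnz in
lemma proj_p (i : Fin r) : proj σ p (p i) = p i := by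
  rw [proj_apply, Finset.sum_eq_single i]
  · rw [← sq, div_self (hnz i), one_smul]
  · intro j _ hj
    rw [horth i j (Ne.symm hj), zero_div, zero_smul]
  · intro h; exact absurd (Finset.mem_univ i) h
include horth hnz in
lemma proj_id_on {g : MvPolynomial (Fin n) ℝ} (hg : g ∈ Submodule.span ℝ (Set.range p)) :
    proj σ p g = g := by
  induction hg using Submodule.span_induction with
  | mem x hx => obtain ⟨i, rfl⟩ := hx; exact proj_p σ p horth hnz i
  | zero => simp
  | add x y _ _ hx hy => rw [map_add, hx, hy]
  | smul a x _ hx => rw [LinearMap.map_smul, hx]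
include horth hnz in
lemma eq_zero_of_orth {g : MvPolynomial (Fin n) ℝ}
    (hg : g ∈ Submodule.span ℝ (Set.range p)) (h : ∀ j, σ (g * p j) = 0) : g = 0 := by
  rw [← proj_id_on σ p horth hnz hg, proj_apply]; simp [h]

----------------- part 2 -----------------

variable (B : Finset (Fin n →₀ ℕ)) (ρ : ↥(borderSet B) → MvPolynomial (Fin n) ℝ)
variable (hρ : ∀ m : ↥(borderSet B), ρ m = monomial (m : Fin n →₀ ℕ) 1 -
      ∑ j, (σ (monomial (m : Fin n →₀ ℕ) 1 * p j) / σ (p j ^ 2)) • p j)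

include horth hnz hρ in
lemma sigma_p_rho (j : Fin r) (m : ↥(borderSet B)) : σ (p j * ρ m) = 0 := by
  rw [hρ m, mul_sub, map_sub, Finset.mul_sum, map_sum]
  rw [Finset.sum_eq_single j]
  · rw [mul_smul_comm, LinearMap.map_smul, smul_eq_mul, mul_comm (p j), ← sq,
      div_mul_cancel₀ _ (hnz j), mul_comm, sub_self]
  · intro l _ hl
    rw [mul_smul_comm, LinearMap.map_smul, mul_comm (p j) (p l), horth l j hl, smul_zero]
  · intro h; exact absurd (Finset.mem_univ j) h

include horth hnz hρ in
lemma sigma_V_rho {g : MvPolynomial (Fin n) ℝ} (hg : g ∈ Submodule.span ℝ (Set.range p))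
    (m : ↥(borderSet B)) : σ (g * ρ m) = 0 := by
  induction hg using Submodule.span_induction with
  | mem x hx => obtain ⟨i, rfl⟩ := hx; exact sigma_p_rho σ p horth hnz B ρ hρ i m
  | zero => simp
  | add x y _ _ hx hy => rw [add_mul, map_add, hx, hy, add_zero]
  | smul a x _ hx => rw [smul_mul_assoc, LinearMap.map_smul, hx, smul_zero]

include horth hnz hρ in
lemma sigma_V_spanrho {g h : MvPolynomial (Fin n) ℝ}
    (hg : g ∈ Submodule.span ℝ (Set.range p)) (hh : h ∈ Submodule.span ℝ (Set.range ρ)) :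
    σ (g * h) = 0 := by
  induction hh using Submodule.span_induction with
  | mem x hx => obtain ⟨m, rfl⟩ := hx; exact sigma_V_rho σ p horth hnz B ρ hρ hg m
  | zero => simp
  | add x y _ _ hx hy => rw [mul_add, map_add, hx, hy, add_zero]
  | smul a x _ hx => rw [mul_smul_comm, LinearMap.map_smul, hx, smul_zero]

variable (horthρ : ∀ m m' : ↥(borderSet B), σ (ρ m * ρ m') = 0)

include horthρ in
lemma sigma_rho_spanrho (m : ↥(borderSet B)) {h : MvPolynomial (Fin n) ℝ}
    (hh : h ∈ Submodule.span ℝ (Set.range ρ)) : σ (ρ m * h) = 0 := by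
  induction hh using Submodule.span_induction with
  | mem x hx => obtain ⟨m', rfl⟩ := hx; exact horthρ m m'
  | zero => simp
  | add x y _ _ hx hy => rw [mul_add, map_add, hx, hy, add_zero]
  | smul a x _ hx => rw [mul_smul_comm, LinearMap.map_smul, hx, smul_zero]

include horthρ in
lemma sigma_spanrho_spanrho {g h : MvPolynomial (Fin n) ℝ}
    (hg : g ∈ Submodule.span ℝ (Set.range ρ)) (hh : h ∈ Submodule.span ℝ (Set.range ρ)) :
    σ (g * h) = 0 := by
  induction hg using Submodule.span_induction with
  | mem x hx => obtain ⟨m, rfl⟩ := hx; exact sigma_rho_spanrho σ B ρ horthρ m hh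
  | zero => simp
  | add x y _ _ hx hy => rw [add_mul, map_add, hx, hy, add_zero]
  | smul a x _ hx => rw [smul_mul_assoc, LinearMap.map_smul, hx, smul_zero]

include horth hnz hρ horthρ in
/-- expansion lemma : if `f, g` differ from their projections by span-of-ρ elements then
`σ (proj f * proj g) = σ (f * g)`. -/
lemma sigma_proj_mul {f g : MvPolynomial (Fin n) ℝ}
    (hf : f - proj σ p f ∈ Submodule.span ℝ (Set.range ρ))
    (hg : g - proj σ p g ∈ Submodule.span ℝ (Set.range ρ)) :
    σ (proj σ p f * proj σ p g) = σ (f * g) := by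
  have e : f * g = proj σ p f * proj σ p g + (proj σ p f * (g - proj σ p g)
      + ((f - proj σ p f) * proj σ p g + (f - proj σ p f) * (g - proj σ p g))) := by ring
  have h1 : σ (proj σ p f * (g - proj σ p g)) = 0 :=
    sigma_V_spanrho σ p horth hnz B ρ hρ (proj_mem σ p f) hg
  have h2 : σ ((f - proj σ p f) * proj σ p g) = 0 := by
    rw [mul_comm]; exact sigma_V_spanrho σ p horth hnz B ρ hρ (proj_mem σ p g) hf
  have h3 : σ ((f - proj σ p f) * (g - proj σ p g)) = 0 :=
    sigma_spanrho_spanrho σ B ρ horthρ hf hg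
  rw [e, map_add, map_add, map_add, h1, h2, h3]
  ring

----------------- multiplication operators -----------------

noncomputable def Mop (k : Fin n) :
    ↥(Submodule.span ℝ (Set.range p)) →ₗ[ℝ] ↥(Submodule.span ℝ (Set.range p)) :=
  LinearMap.codRestrict _
    ((proj σ p) ∘ₗ (LinearMap.mulLeft ℝ (X k)) ∘ₗ (Submodule.span ℝ (Set.range p)).subtype)
    fun _ => proj_mem σ p _

lemma Mop_apply (k : Fin n) (v : ↥(Submodule.span ℝ (Set.range p))) :
    (Mop σ p k v : MvPolynomial (Fin n) ℝ) = proj σ p (X k * (v : MvPolynomial (Fin n) ℝ)) := rfl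

variable (hspan : Submodule.span ℝ (Set.range p) = spanMon B)

include hρ hspan in
lemma mono_sub_proj {γ : Fin n →₀ ℕ} (hγ : γ ∈ plusSet B) (horth' : ∀ i j, i ≠ j → σ (p i * p j) = 0)
    (hnz' : ∀ j, σ (p j ^ 2) ≠ 0) :
    monomial γ (1:ℝ) - proj σ p (monomial γ 1) ∈ Submodule.span ℝ (Set.range ρ) := by
  by_cases h : γ ∈ B
  · have hm : (monomial γ (1:ℝ)) ∈ Submodule.span ℝ (Set.range p) := by
      rw [hspan]
      exact Submodule.subset_span ⟨γ, h, rfl⟩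
    rw [proj_id_on σ p horth' hnz' hm, sub_self]
    exact Submodule.zero_mem _
  · have hm : γ ∈ borderSet B := Finset.mem_sdiff.mpr ⟨hγ, h⟩
    have : monomial γ (1:ℝ) - proj σ p (monomial γ 1) = ρ ⟨γ, hm⟩ := by
      rw [hρ ⟨γ, hm⟩, proj_apply]
    rw [this]
    exact Submodule.subset_span ⟨⟨γ, hm⟩, rfl⟩

include hρ hspan horth hnz in
lemma Xmul_sub_proj {g : MvPolynomial (Fin n) ℝ} (hg : g ∈ Submodule.span ℝ (Set.range p))
    (k : Fin n) : X k * g - proj σ p (X k * g) ∈ Submodule.span ℝ (Set.range ρ) := by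
  rw [hspan] at hg
  induction hg using Submodule.span_induction with
  | mem x hx =>
    obtain ⟨β, hβ, rfl⟩ := hx
    have e : X k * monomial β (1:ℝ) = monomial (β + Finsupp.single k 1) 1 := by
      rw [add_comm, monomial_single_add, pow_one]
    have hmem : β + Finsupp.single k 1 ∈ plusSet B := by
      apply Finset.mem_union_right
      exact Finset.mem_biUnion.mpr ⟨k, Finset.mem_univ k,
        Finset.mem_image.mpr ⟨β, hβ, rfl⟩⟩
    rw [e]
    exact mono_sub_proj σ p B ρ hρ hspan hmem horth hnz
  | zero => simp
  | add x y _ _ hx hy =>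
    have e : X k * (x + y) - proj σ p (X k * (x + y))
        = (X k * x - proj σ p (X k * x)) + (X k * y - proj σ p (X k * y)) := by
      rw [mul_add, map_add]; ring
    rw [e]; exact Submodule.add_mem _ hx hy
  | smul a x _ hx =>
    have e : X k * (a • x) - proj σ p (X k * (a • x))
        = a • (X k * x - proj σ p (X k * x)) := by
      rw [mul_smul_comm, LinearMap.map_smul, smul_sub]
    rw [e]; exact Submodule.smul_mem _ _ hx

include hρ hspan horth hnz in
lemma Mop_selfadj (k : Fin n) (a b : ↥(Submodule.span ℝ (Set.range p))) :
    σ ((Mop σ p k a : MvPolynomial (Fin n) ℝ) * (b : MvPolynomial (Fin n) ℝ))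
      = σ ((a : MvPolynomial (Fin n) ℝ) * (Mop σ p k b : MvPolynomial (Fin n) ℝ)) := by
  have ha := Xmul_sub_proj σ p horth hnz B ρ hρ hspan a.2 k
  have hb := Xmul_sub_proj σ p horth hnz B ρ hρ hspan b.2 k
  set a' : MvPolynomial (Fin n) ℝ := (a : MvPolynomial (Fin n) ℝ)
  set b' : MvPolynomial (Fin n) ℝ := (b : MvPolynomial (Fin n) ℝ)
  have e1 : σ ((Mop σ p k a : MvPolynomial (Fin n) ℝ) * b') = σ (X k * a' * b') := by
    rw [Mop_apply]
    have e : (proj σ p (X k * a')) * b'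
        = X k * a' * b' - (X k * a' - proj σ p (X k * a')) * b' := by ring
    have hz : σ ((X k * a' - proj σ p (X k * a')) * b') = 0 := by
      rw [mul_comm]
      exact sigma_V_spanrho σ p horth hnz B ρ hρ b.2 ha
    rw [e, map_sub, hz, sub_zero]
  have e2 : σ (a' * (Mop σ p k b : MvPolynomial (Fin n) ℝ)) = σ (X k * a' * b') := by
    rw [Mop_apply]
    have e : a' * proj σ p (X k * b')
        = X k * a' * b' - (a' * (X k * b' - proj σ p (X k * b'))) := by ring
    rw [e, map_sub, sigma_V_spanrho σ p horth hnz B ρ hρ a.2 hb, sub_zero]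
  rw [e1, e2]

include hρ hspan horth hnz horthρ in
lemma sigma_MopMop (k l : Fin n) (a b : ↥(Submodule.span ℝ (Set.range p))) :
    σ ((Mop σ p k (Mop σ p l a) : MvPolynomial (Fin n) ℝ) * (b : MvPolynomial (Fin n) ℝ))
      = σ (X k * X l * (a : MvPolynomial (Fin n) ℝ) * (b : MvPolynomial (Fin n) ℝ)) := by
  rw [Mop_selfadj σ p horth hnz B ρ hρ hspan k _ b, Mop_apply, Mop_apply]
  rw [sigma_proj_mul σ p horth hnz B ρ hρ horthρ
    (Xmul_sub_proj σ p horth hnz B ρ hρ hspan a.2 l)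
    (Xmul_sub_proj σ p horth hnz B ρ hρ hspan b.2 k)]
  ring_nf

include hρ hspan horth hnz horthρ in
lemma Mop_comm (k l : Fin n) : Mop σ p k * Mop σ p l = Mop σ p l * Mop σ p k := by
  refine LinearMap.ext fun v => ?_
  have h : ∀ j, σ ((((Mop σ p k (Mop σ p l v) - Mop σ p l (Mop σ p k v)) :
      ↥(Submodule.span ℝ (Set.range p))) : MvPolynomial (Fin n) ℝ) * p j) = 0 := by
    intro j
    have hpj : p j ∈ Submodule.span ℝ (Set.range p) := Submodule.subset_span ⟨j, rfl⟩
    have h1 := sigma_MopMop σ p horth hnz B ρ hρ horthρ hspan k l v ⟨p j, hpj⟩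
    have h2 := sigma_MopMop σ p horth hnz B ρ hρ horthρ hspan l k v ⟨p j, hpj⟩
    rw [Submodule.coe_sub, sub_mul, map_sub, h1, h2]
    ring_nf
  have hz : ((Mop σ p k (Mop σ p l v) - Mop σ p l (Mop σ p k v) :
      ↥(Submodule.span ℝ (Set.range p))) : MvPolynomial (Fin n) ℝ) = 0 :=
    eq_zero_of_orth σ p horth hnz (Submodule.coe_mem _) h
  have e : Mop σ p k (Mop σ p l v) = Mop σ p l (Mop σ p k v) := by
    have : Mop σ p k (Mop σ p l v) - Mop σ p l (Mop σ p k v) = 0 :=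
      Subtype.ext (by simp [hz])
    exact sub_eq_zero.mp this
  simp only [Module.End.mul_apply]
  exact e

----------------- abstract: evaluation of polynomials on commuting operators -----------------

section PhiAux

variable {V : Type} [AddCommGroup V] [Module ℝ V] (M : Fin n → Module.End ℝ V)
  (hc : ∀ a ∈ Set.range M, ∀ b ∈ Set.range M, a * b = b * a)

noncomputable def phiAux (q : MvPolynomial (Fin n) ℝ) : Module.End ℝ V :=
  letI := Algebra.adjoinCommRingOfComm ℝ hc
  ((aeval (fun k => (⟨M k, Algebra.subset_adjoin ⟨k, rfl⟩⟩ :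
      Algebra.adjoin ℝ (Set.range M))) q : Algebra.adjoin ℝ (Set.range M)) : Module.End ℝ V)

lemma phiAux_mul (q q' : MvPolynomial (Fin n) ℝ) :
    phiAux M hc (q * q') = phiAux M hc q * phiAux M hc q' := by
  letI := Algebra.adjoinCommRingOfComm ℝ hc
  unfold phiAux
  rw [_root_.map_mul]
  rfl

lemma phiAux_add (q q' : MvPolynomial (Fin n) ℝ) :
    phiAux M hc (q + q') = phiAux M hc q + phiAux M hc q' := by
  letI := Algebra.adjoinCommRingOfComm ℝ hc
  unfold phiAux
  rw [_root_.map_add]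
  rfl

lemma phiAux_one : phiAux M hc 1 = 1 := by
  letI := Algebra.adjoinCommRingOfComm ℝ hc
  unfold phiAux
  rw [_root_.map_one]
  rfl

lemma phiAux_X (k : Fin n) : phiAux M hc (X k) = M k := by
  letI := Algebra.adjoinCommRingOfComm ℝ hc
  unfold phiAux
  rw [aeval_X]

lemma phiAux_C_apply (a : ℝ) (v : V) : phiAux M hc (C a) v = a • v := by
  letI := Algebra.adjoinCommRingOfComm ℝ hc
  have e : phiAux M hc (C a) = a • (1 : Module.End ℝ V) := by
    unfold phiAux
    rw [aeval_C]
    rfl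
  rw [e]
  simp

end PhiAux

----------------- the operator calculus for our situation -----------------

variable (hc : ∀ a ∈ Set.range (Mop σ p), ∀ b ∈ Set.range (Mop σ p), a * b = b * a)

variable (h1 : (1 : MvPolynomial (Fin n) ℝ) ∈ Submodule.span ℝ (Set.range p))

noncomputable def Nmap : MvPolynomial (Fin n) ℝ →ₗ[ℝ] ↥(Submodule.span ℝ (Set.range p)) where
  toFun q := phiAux (Mop σ p) hc q ⟨1, h1⟩
  map_add' q q' := by
    simp only [phiAux_add, LinearMap.add_apply]
  map_smul' a q := by
    simp only [smul_eq_C_mul, phiAux_mul, Module.End.mul_apply, phiAux_C_apply,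
      RingHom.id_apply]

lemma Nmap_apply (q : MvPolynomial (Fin n) ℝ) :
    Nmap σ p hc h1 q = phiAux (Mop σ p) hc q ⟨1, h1⟩ := rfl

lemma N_one : Nmap σ p hc h1 1 = ⟨1, h1⟩ := by
  rw [Nmap_apply, phiAux_one]; rfl

lemma N_fmul (f q : MvPolynomial (Fin n) ℝ) :
    Nmap σ p hc h1 (f * q) = phiAux (Mop σ p) hc f (Nmap σ p hc h1 q) := by
  rw [Nmap_apply, phiAux_mul]; rfl

lemma N_Xmul (k : Fin n) (q : MvPolynomial (Fin n) ℝ) :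
    Nmap σ p hc h1 (X k * q) = Mop σ p k (Nmap σ p hc h1 q) := by
  rw [N_fmul, phiAux_X]

include horth hnz hspan in
lemma N_mono_B (hB : connectedTo1 B) :
    ∀ α ∈ B, (Nmap σ p hc h1 (monomial α 1) : MvPolynomial (Fin n) ℝ) = monomial α 1 := by
  suffices H : ∀ d : ℕ, ∀ α, α ∈ B → (α.sum fun _ e => e) = d →
      (Nmap σ p hc h1 (monomial α 1) : MvPolynomial (Fin n) ℝ) = monomial α 1 by
    exact fun α hα => H _ α hα rfl
  intro d
  induction d using Nat.strong_induction_on with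
  | _ d ih =>
    intro α hα hd
    by_cases h0 : α = 0
    · subst h0
      have e : monomial (0 : Fin n →₀ ℕ) (1:ℝ) = 1 := by simp
      rw [e, N_one]
    · obtain ⟨i, β, hβ, rfl⟩ := hB.2 α hα h0
      have hdeg : (β.sum fun _ e => e) < d := by
        subst hd
        rw [Finsupp.sum_add_index' (fun _ => rfl) (fun _ _ _ => rfl),
          Finsupp.sum_single_index rfl]
        omega
      have e : monomial (β + Finsupp.single i 1) (1:ℝ) = X i * monomial β 1 := by
        rw [add_comm, monomial_single_add, pow_one]
      have hmemβ : (monomial β (1:ℝ)) ∈ Submodule.span ℝ (Set.range p) := by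
        rw [hspan]; exact Submodule.subset_span ⟨β, hβ, rfl⟩
      have hNβ : Nmap σ p hc h1 (monomial β 1) = ⟨monomial β 1, hmemβ⟩ :=
        Subtype.ext (ih _ hdeg β hβ rfl)
      rw [e, N_Xmul, hNβ, Mop_apply]
      exact proj_id_on σ p horth hnz (by rw [← e, hspan]; exact Submodule.subset_span ⟨_, hα, rfl⟩)

include horth hnz hspan in
lemma N_id_on (hB : connectedTo1 B) {g : MvPolynomial (Fin n) ℝ}
    (hg : g ∈ Submodule.span ℝ (Set.range p)) :
    (Nmap σ p hc h1 g : MvPolynomial (Fin n) ℝ) = g := by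
  rw [hspan] at hg
  induction hg using Submodule.span_induction with
  | mem x hx =>
    obtain ⟨α, hα, rfl⟩ := hx
    exact N_mono_B σ p horth hnz B hspan hc h1 hB α hα
  | zero => simp
  | add x y _ _ hx hy => rw [map_add, Submodule.coe_add, hx, hy]
  | smul a x _ hx => rw [LinearMap.map_smul, Submodule.coe_smul, hx]

include horth hnz hspan in
lemma N_mono_plus (hB : connectedTo1 B) {γ : Fin n →₀ ℕ} (hγ : γ ∈ plusSet B) :
    (Nmap σ p hc h1 (monomial γ 1) : MvPolynomial (Fin n) ℝ) = proj σ p (monomial γ 1) := by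
  by_cases h : γ ∈ B
  · have hmem : (monomial γ (1:ℝ)) ∈ Submodule.span ℝ (Set.range p) := by
      rw [hspan]; exact Submodule.subset_span ⟨γ, h, rfl⟩
    rw [N_mono_B σ p horth hnz B hspan hc h1 hB γ h, proj_id_on σ p horth hnz hmem]
  · rcases Finset.mem_union.mp hγ with h' | h'
    · exact absurd h' h
    · obtain ⟨i, _, hmem⟩ := Finset.mem_biUnion.mp h'
      obtain ⟨β, hβ, rfl⟩ := Finset.mem_image.mp hmem
      have e : monomial (β + Finsupp.single i 1) (1:ℝ) = X i * monomial β 1 := by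
        rw [add_comm, monomial_single_add, pow_one]
      have hmemβ : (monomial β (1:ℝ)) ∈ Submodule.span ℝ (Set.range p) := by
        rw [hspan]; exact Submodule.subset_span ⟨β, hβ, rfl⟩
      have hNβ : Nmap σ p hc h1 (monomial β 1) = ⟨monomial β 1, hmemβ⟩ :=
        Subtype.ext (N_mono_B σ p horth hnz B hspan hc h1 hB β hβ)
      rw [e, N_Xmul, hNβ, Mop_apply]

include horth hnz hρ hspan in
lemma phi_selfadj (q : MvPolynomial (Fin n) ℝ) (a b : ↥(Submodule.span ℝ (Set.range p))) :
    σ ((phiAux (Mop σ p) hc q a : MvPolynomial (Fin n) ℝ) * (b : MvPolynomial (Fin n) ℝ))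
      = σ ((a : MvPolynomial (Fin n) ℝ) * (phiAux (Mop σ p) hc q b : MvPolynomial (Fin n) ℝ)) := by
  induction q using MvPolynomial.induction_on generalizing a b with
  | C c =>
    rw [phiAux_C_apply, phiAux_C_apply, Submodule.coe_smul, Submodule.coe_smul,
      smul_mul_assoc, mul_smul_comm, _root_.map_smul]
  | add q q' hq hq' =>
    rw [phiAux_add, LinearMap.add_apply, LinearMap.add_apply, Submodule.coe_add,
      Submodule.coe_add, add_mul, mul_add, map_add, map_add, hq, hq']
  | mul_X q i hq =>
    have e1 : phiAux (Mop σ p) hc (q * X i) a = phiAux (Mop σ p) hc q (Mop σ p i a) := by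
      rw [phiAux_mul, Module.End.mul_apply, phiAux_X]
    have e2 : phiAux (Mop σ p) hc (q * X i) b = Mop σ p i (phiAux (Mop σ p) hc q b) := by
      rw [mul_comm q (X i), phiAux_mul, Module.End.mul_apply, phiAux_X]
    rw [e1, e2, hq (Mop σ p i a) b, Mop_selfadj σ p horth hnz B ρ hρ hspan]

include horth hnz hρ hspan in
lemma sigma_N_mul (q q' : MvPolynomial (Fin n) ℝ) :
    σ (Nmap σ p hc h1 (q * q') : MvPolynomial (Fin n) ℝ)
      = σ ((Nmap σ p hc h1 q : MvPolynomial (Fin n) ℝ)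
          * (Nmap σ p hc h1 q' : MvPolynomial (Fin n) ℝ)) := by
  have e : σ (Nmap σ p hc h1 (q * q') : MvPolynomial (Fin n) ℝ)
      = σ ((phiAux (Mop σ p) hc q (Nmap σ p hc h1 q') : MvPolynomial (Fin n) ℝ)
          * ((⟨1, h1⟩ : ↥(Submodule.span ℝ (Set.range p))) : MvPolynomial (Fin n) ℝ)) := by
    rw [N_fmul]
    norm_num
  rw [e, phi_selfadj σ p horth hnz B ρ hρ hspan hc q]
  show σ ((Nmap σ p hc h1 q' : MvPolynomial (Fin n) ℝ)
    * (phiAux (Mop σ p) hc q ⟨1, h1⟩ : MvPolynomial (Fin n) ℝ)) = _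
  rw [← Nmap_apply, mul_comm]

end Stmt9Aux

/-- given an orthogonal family `P` spanning `⟨B⟩` and border relations `ρᵢ`
orthogonal to each other, `σ` coincides on `⟨B⁺·B⁺⟩` with a linear form `σ̃` whose Hankel
operator has rank `r = |B|`, `B` and `P` are bases of `R/ker H_{σ̃}` (they span complements
of the kernel), `ker H_{σ̃}` is the ideal generated by the `ρᵢ`, and the matrix of
multiplication by `x_k` in the basis `P` is `(σ(x_k pᵢ pⱼ)/σ(pⱼ²))_{i,j}`. -/
theorem stmt9 (n : ℕ) (B : Finset (Fin n →₀ ℕ)) (hB : connectedTo1 B)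
    (σ : Module.Dual ℝ (MvPolynomial (Fin n) ℝ))
    (p : Fin B.card → MvPolynomial (Fin n) ℝ)
    (hspan : Submodule.span ℝ (Set.range p) = spanMon B)
    (horth : ∀ i j, i ≠ j → σ (p i * p j) = 0)
    (hnz : ∀ j, σ (p j ^ 2) ≠ 0)
    (ρ : ↥(borderSet B) → MvPolynomial (Fin n) ℝ)
    (hρ : ∀ m : ↥(borderSet B), ρ m = monomial (m : Fin n →₀ ℕ) 1 -
      ∑ j, (σ (monomial (m : Fin n →₀ ℕ) 1 * p j) / σ (p j ^ 2)) • p j)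
    (horthρ : ∀ m m' : ↥(borderSet B), σ (ρ m * ρ m') = 0) :
    ∃ σt : Module.Dual ℝ (MvPolynomial (Fin n) ℝ),
      (∀ α ∈ mulSet (plusSet B) (plusSet B), σt (monomial α 1) = σ (monomial α 1)) ∧
      LinearMap.rank (hankel σt) = (B.card : Cardinal) ∧
      IsCompl (spanMon B) (LinearMap.ker (hankel σt)) ∧
      IsCompl (Submodule.span ℝ (Set.range p)) (LinearMap.ker (hankel σt)) ∧
      LinearMap.ker (hankel σt) = Submodule.restrictScalars ℝ (Ideal.span (Set.range ρ)) ∧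
      ∀ (k : Fin n) (i : Fin B.card),
        X k * p i - ∑ j, (σ (X k * p i * p j) / σ (p j ^ 2)) • p j
          ∈ LinearMap.ker (hankel σt) := by
  classical
  have hc : ∀ a ∈ Set.range (Stmt9Aux.Mop σ p), ∀ b ∈ Set.range (Stmt9Aux.Mop σ p),
      a * b = b * a := by
    rintro a ⟨k, rfl⟩ b ⟨l, rfl⟩
    exact Stmt9Aux.Mop_comm σ p horth hnz B ρ hρ horthρ hspan k l
  have hmono0 : monomial (0 : Fin n →₀ ℕ) (1:ℝ) = 1 := by simp
  have h1 : (1 : MvPolynomial (Fin n) ℝ) ∈ Submodule.span ℝ (Set.range p) := by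
    rw [hspan, ← hmono0]
    exact Submodule.subset_span ⟨0, hB.1, rfl⟩
  set V := Submodule.span ℝ (Set.range p) with hV
  set N : MvPolynomial (Fin n) ℝ →ₗ[ℝ] ↥V := Stmt9Aux.Nmap σ p hc h1 with hN
  set σt : Module.Dual ℝ (MvPolynomial (Fin n) ℝ) := σ.comp (V.subtype.comp N) with hσt
  have hσt_apply : ∀ q, σt q = σ ((N q : MvPolynomial (Fin n) ℝ)) := fun q => rfl
  have hσt_mul : ∀ q q', σt (q * q')
      = σ ((N q : MvPolynomial (Fin n) ℝ) * (N q' : MvPolynomial (Fin n) ℝ)) := fun q q' =>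
    Stmt9Aux.sigma_N_mul σ p horth hnz B ρ hρ hspan hc h1 q q'
  have hNid : ∀ {g : MvPolynomial (Fin n) ℝ}, g ∈ V →
      (N g : MvPolynomial (Fin n) ℝ) = g := fun hg =>
    Stmt9Aux.N_id_on σ p horth hnz B hspan hc h1 hB hg
  have hNid' : ∀ v : ↥V, N (v : MvPolynomial (Fin n) ℝ) = v := fun v =>
    Subtype.ext (hNid v.2)
  -- membership in the kernel of the Hankel operator is the same as `N q = 0`
  have hker : ∀ q, q ∈ LinearMap.ker (hankel σt) ↔ N q = 0 := by
    intro q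
    rw [LinearMap.mem_ker]
    constructor
    · intro h
      have hall : ∀ j, σ ((N q : MvPolynomial (Fin n) ℝ) * p j) = 0 := by
        intro j
        have hpj : p j ∈ V := Submodule.subset_span ⟨j, rfl⟩
        have h0 : hankel σt q (p j) = 0 := by rw [h]; rfl
        have h1' : σt (q * p j) = 0 := h0
        rw [hσt_mul, hNid hpj] at h1'
        exact h1'
      have := Stmt9Aux.eq_zero_of_orth σ p horth hnz (N q).2 hall
      exact Subtype.ext (by simp [this])
    · intro h
      refine LinearMap.ext fun q' => ?_
      show σt (q * q') = 0
      rw [hσt_mul, h]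
      simp
  -- every polynomial is congruent to its projection modulo the ideal of the ρ's
  have hsub : ∀ x ∈ Submodule.span ℝ (Set.range ρ), x ∈ Ideal.span (Set.range ρ) := by
    intro x hx
    have hle : Submodule.span ℝ (Set.range ρ)
        ≤ Submodule.restrictScalars ℝ (Ideal.span (Set.range ρ)) :=
      Submodule.span_le.mpr fun y hy => Ideal.subset_span hy
    exact hle hx
  have hNsub : ∀ q : MvPolynomial (Fin n) ℝ,
      q - (N q : MvPolynomial (Fin n) ℝ) ∈ Ideal.span (Set.range ρ) := by
    intro q
    induction q using MvPolynomial.induction_on with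
    | C a =>
      have e : (N (C a) : MvPolynomial (Fin n) ℝ) = C a := by
        have e1 : (C a : MvPolynomial (Fin n) ℝ) = a • (1 : MvPolynomial (Fin n) ℝ) := by
          rw [smul_eq_C_mul, mul_one]
        rw [e1, LinearMap.map_smul, Stmt9Aux.N_one]
        simp [e1]
      rw [e, sub_self]
      exact Submodule.zero_mem _
    | add q q' hq hq' =>
      have e : q + q' - (N (q + q') : MvPolynomial (Fin n) ℝ)
          = (q - (N q : MvPolynomial (Fin n) ℝ)) + (q' - (N q' : MvPolynomial (Fin n) ℝ)) := by
        rw [map_add, Submodule.coe_add]; ring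
      rw [e]
      exact Submodule.add_mem _ hq hq'
    | mul_X q i hq =>
      have hNX : (N (q * X i) : MvPolynomial (Fin n) ℝ)
          = Stmt9Aux.proj σ p (X i * (N q : MvPolynomial (Fin n) ℝ)) := by
        rw [mul_comm, Stmt9Aux.N_Xmul, Stmt9Aux.Mop_apply]
      have e : q * X i - (N (q * X i) : MvPolynomial (Fin n) ℝ)
          = X i * (q - (N q : MvPolynomial (Fin n) ℝ))
            + (X i * (N q : MvPolynomial (Fin n) ℝ)
               - Stmt9Aux.proj σ p (X i * (N q : MvPolynomial (Fin n) ℝ))) := by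
        rw [hNX]; ring
      rw [e]
      exact Submodule.add_mem _ (Ideal.mul_mem_left _ _ hq)
        (hsub _ (Stmt9Aux.Xmul_sub_proj σ p horth hnz B ρ hρ hspan (N q).2 i))
  -- `N` kills each ρ
  have hNρ : ∀ m : ↥(borderSet B), N (ρ m) = 0 := by
    intro m
    have hmem : (m : Fin n →₀ ℕ) ∈ plusSet B := (Finset.mem_sdiff.mp m.2).1
    have e1 : (N (monomial (m : Fin n →₀ ℕ) 1) : MvPolynomial (Fin n) ℝ)
        = Stmt9Aux.proj σ p (monomial (m : Fin n →₀ ℕ) 1) :=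
      Stmt9Aux.N_mono_plus σ p horth hnz B hspan hc h1 hB hmem
    have e2 : ((N (∑ j, (σ (monomial (m : Fin n →₀ ℕ) 1 * p j) / σ (p j ^ 2)) • p j) : ↥V) :
        MvPolynomial (Fin n) ℝ)
        = Stmt9Aux.proj σ p (monomial (m : Fin n →₀ ℕ) 1) := by
      rw [map_sum, Submodule.coe_sum, Stmt9Aux.proj_apply]
      refine Finset.sum_congr rfl fun j _ => ?_
      rw [LinearMap.map_smul, Submodule.coe_smul, hNid (Submodule.subset_span ⟨j, rfl⟩)]
    apply Subtype.ext
    rw [hρ m, map_sub, Submodule.coe_sub, Submodule.coe_zero, e1, e2, sub_self]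
  -- kernel equals the ideal
  have hkerideal : LinearMap.ker (hankel σt)
      = Submodule.restrictScalars ℝ (Ideal.span (Set.range ρ)) := by
    ext q
    rw [hker]
    constructor
    · intro h
      have := hNsub q
      rw [h] at this
      simpa using this
    · intro hq
      have hq' : q ∈ Ideal.span (Set.range ρ) := hq
      clear hq
      induction hq' using Submodule.span_induction with
      | mem x hx =>
        obtain ⟨m, rfl⟩ := hx
        exact hNρ m
      | zero => simp
      | add x y _ _ hx hy =>
        rw [map_add, hx, hy, add_zero]
      | smul a x _ hx =>
        rw [smul_eq_mul, Stmt9Aux.N_fmul, hx, LinearMap.map_zero]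
  -- complementarity
  have hcompl : IsCompl V (LinearMap.ker (hankel σt)) := by
    constructor
    · rw [Submodule.disjoint_def]
      intro q hqV hqK
      have h0 : N q = 0 := (hker q).mp hqK
      have e := hNid hqV
      rw [h0] at e
      simpa using e.symm
    · rw [codisjoint_iff, eq_top_iff]
      intro q _
      have m2 : q - (N q : MvPolynomial (Fin n) ℝ) ∈ LinearMap.ker (hankel σt) :=
        (hker _).mpr (by rw [map_sub, hNid' (N q), sub_self])
      have e : q = ((N q : MvPolynomial (Fin n) ℝ)) + (q - (N q : MvPolynomial (Fin n) ℝ)) := by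
        ring
      rw [e]
      exact Submodule.add_mem_sup (N q).2 m2
  -- the rank computation
  have hrank : LinearMap.rank (hankel σt) = (B.card : Cardinal) := by
    have li : LinearIndependent ℝ
        (fun α : {x // x ∈ B} => monomial (α : Fin n →₀ ℕ) (1:ℝ)) := by
      have := (MvPolynomial.basisMonomials (Fin n) ℝ).linearIndependent.comp
        (Subtype.val : {x // x ∈ B} → (Fin n →₀ ℕ)) Subtype.val_injective
      simpa [Function.comp_def, coe_basisMonomials] using this
    have hsp : Submodule.span ℝ
        (Set.range fun α : {x // x ∈ B} => monomial (α : Fin n →₀ ℕ) (1:ℝ)) = V := by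
      rw [hspan, spanMon, Set.image_eq_range]
      rfl
    have bV : Module.Basis {x // x ∈ B} ℝ ↥V := (Module.Basis.span li).map (LinearEquiv.ofEq _ _ hsp)
    have ekr : LinearMap.ker (hankel σt) = LinearMap.ker N := by
      ext q
      exact (hker q).trans (LinearMap.mem_ker).symm
    have hsurj : Function.Surjective N := fun v => ⟨(v : MvPolynomial (Fin n) ℝ), hNid' v⟩
    have E : ↥(LinearMap.range (hankel σt)) ≃ₗ[ℝ] ↥V :=
      (LinearMap.quotKerEquivRange (hankel σt)).symm.trans
        ((Submodule.quotEquivOfEq _ _ ekr).trans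
          ((LinearMap.quotKerEquivRange N).trans
            (LinearEquiv.ofTop _ (LinearMap.range_eq_top.mpr hsurj))))
    have bR : Module.Basis {x // x ∈ B} ℝ ↥(LinearMap.range (hankel σt)) := bV.map E.symm
    show Module.rank ℝ ↥(LinearMap.range (hankel σt)) = (B.card : Cardinal)
    have e4 := Module.Basis.mk_eq_rank'' (R := ℝ) (M := ↥(LinearMap.range (hankel σt))) bR
    rw [Cardinal.mk_coe_finset] at e4
    exact e4.symm
  refine ⟨σt, ?_, hrank, ?_, ?_, hkerideal, ?_⟩
  · -- agreement on B⁺ · B⁺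
    intro α hα
    obtain ⟨⟨γ, δ⟩, hmem, rfl⟩ := Finset.mem_image.mp hα
    obtain ⟨hγ, hδ⟩ := Finset.mem_product.mp hmem
    have emul : (monomial (γ + δ) (1:ℝ)) = monomial γ 1 * monomial δ 1 := by
      rw [monomial_mul, one_mul]
    rw [emul, hσt_mul,
      Stmt9Aux.N_mono_plus σ p horth hnz B hspan hc h1 hB hγ,
      Stmt9Aux.N_mono_plus σ p horth hnz B hspan hc h1 hB hδ,
      Stmt9Aux.sigma_proj_mul σ p horth hnz B ρ hρ horthρ
        (Stmt9Aux.mono_sub_proj σ p B ρ hρ hspan hγ horth hnz)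
        (Stmt9Aux.mono_sub_proj σ p B ρ hρ hspan hδ horth hnz)]
  · rw [← hspan]
    exact hcompl
  · exact hcompl
  · -- multiplication operators in the basis p
    intro k i
    have hpi : p i ∈ V := Submodule.subset_span ⟨i, rfl⟩
    have e1 : N (X k * p i) = Stmt9Aux.Mop σ p k (N (p i)) := Stmt9Aux.N_Xmul σ p hc h1 k (p i)
    have e2 : N (p i) = ⟨p i, hpi⟩ := hNid' ⟨p i, hpi⟩
    refine (hker _).mpr (Subtype.ext ?_)
    rw [map_sub, Submodule.coe_sub, Submodule.coe_zero, e1, e2, Stmt9Aux.Mop_apply]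
    have e3 : ((N (∑ j, (σ (X k * p i * p j) / σ (p j ^ 2)) • p j) : ↥V) :
        MvPolynomial (Fin n) ℝ) = Stmt9Aux.proj σ p (X k * p i) := by
      rw [map_sum, Submodule.coe_sum, Stmt9Aux.proj_apply]
      refine Finset.sum_congr rfl fun j _ => ?_
      rw [LinearMap.map_smul, Submodule.coe_smul, hNid (Submodule.subset_span ⟨j, rfl⟩)]
    rw [e3, sub_self]
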